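/- Let d ≥ 1 and n ≥ 0 be integers, λ > 0, L > 0, and let x_1, …, x_n ∈ ℝ^d satisfy ‖x_s‖₂ ≤ L for all s. Set G := λ I_d + Σ_{s=1}^n x_s x_sᵀ. Then det(G) ≤ ( (d λ + n L²) / d )^d. -/

import Mathlib

open Matrix Finset

/-- Euclidean norm on ℝ^d. -/
noncomputable def enorm2 {d : ℕ} (x : Fin d → ℝ) : ℝ :=
  Real.sqrt (∑ i, (x i) ^ 2)

lemma vecMulVec_posSemidef {d : ℕ} (v : Fin d → ℝ) :
    (vecMulVec v v).PosSemidef := by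
  have h : vecMulVec v v = replicateCol Unit v * (replicateCol Unit v)ᴴ := by
    rw [conjTranspose_replicateCol]
    have : star v = v := by ext i; simp
    rw [this, vecMulVec_eq Unit]
  rw [h]
  exact posSemidef_self_mul_conjTranspose _

theorem det_le_trace_bound (d n : ℕ) (hd : 1 ≤ d) (lam L : ℝ)
    (hlam : 0 < lam) (hL : 0 < L) (x : ℕ → Fin d → ℝ)
    (hx : ∀ s < n, enorm2 (x s) ≤ L) :
    (lam • (1 : Matrix (Fin d) (Fin d) ℝ) +
        ∑ s ∈ Finset.range n, vecMulVec (x s) (x s)).det ≤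
      (((d : ℝ) * lam + (n : ℝ) * L ^ 2) / (d : ℝ)) ^ d := by
  set G : Matrix (Fin d) (Fin d) ℝ :=
    lam • (1 : Matrix (Fin d) (Fin d) ℝ) +
      ∑ s ∈ Finset.range n, vecMulVec (x s) (x s) with hG
  have hdpos : (0:ℝ) < d := by exact_mod_cast hd
  -- G is positive semidefinite
  have h1 : (lam • (1 : Matrix (Fin d) (Fin d) ℝ)).PosSemidef := by
    rw [smul_one_eq_diagonal]
    exact posSemidef_diagonal_iff.mpr fun _ => hlam.le
  have hsum : (∑ s ∈ Finset.range n, vecMulVec (x s) (x s)).PosSemidef := by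
    refine Finset.sum_induction _ _ (fun a b ha hb => ha.add hb) ?_ ?_
    · exact Matrix.PosSemidef.zero
    · exact fun s _ => vecMulVec_posSemidef (x s)
  have hGps : G.PosSemidef := h1.add hsum
  have hH : G.IsHermitian := hGps.isHermitian
  -- trace of G equals sum of eigenvalues
  have htrace : G.trace = ∑ i, hH.eigenvalues i := by
    simpa using hH.trace_eq_sum_eigenvalues
  -- determinant equals product of eigenvalues
  have hdet : G.det = ∏ i, hH.eigenvalues i := by
    simpa using hH.det_eq_prod_eigenvalues
  -- trace bound
  have htr_le : G.trace ≤ (d : ℝ) * lam + (n : ℝ) * L ^ 2 := by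
    rw [hG, Matrix.trace_add, Matrix.trace_smul, Matrix.trace_one, Matrix.trace_sum]
    have hterm : ∀ s ∈ Finset.range n, (vecMulVec (x s) (x s)).trace ≤ L ^ 2 := by
      intro s hs
      have hxs := hx s (Finset.mem_range.mp hs)
      have hsq : ∑ i, (x s i) ^ 2 ≤ L ^ 2 := by
        have h0 : (0:ℝ) ≤ ∑ i, (x s i) ^ 2 :=
          Finset.sum_nonneg fun i _ => sq_nonneg _
        calc ∑ i, (x s i) ^ 2 = Real.sqrt (∑ i, (x s i) ^ 2) ^ 2 := by
              rw [Real.sq_sqrt h0]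
          _ ≤ L ^ 2 := by
              exact pow_le_pow_left₀ (Real.sqrt_nonneg _) hxs 2
      calc (vecMulVec (x s) (x s)).trace = ∑ i, (x s i) ^ 2 := by
            simp [Matrix.trace, Matrix.diag, vecMulVec_apply, sq]
        _ ≤ L ^ 2 := hsq
    have := Finset.sum_le_sum hterm
    rw [Finset.sum_const, card_range, nsmul_eq_mul] at this
    simp only [Fintype.card_fin, smul_eq_mul] at *
    nlinarith [this]
  -- AM-GM on eigenvalues
  have hev : ∀ i, 0 ≤ hH.eigenvalues i := hGps.eigenvalues_nonneg
  have hT0 : 0 ≤ G.trace := htrace ▸ Finset.sum_nonneg fun i _ => hev i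
  have hamgm : ∏ i, hH.eigenvalues i ≤ (G.trace / d) ^ d := by
    have hw : ∀ i ∈ (Finset.univ : Finset (Fin d)), (0:ℝ) ≤ 1 / d :=
      fun _ _ => by positivity
    have hw1 : ∑ _i ∈ (Finset.univ : Finset (Fin d)), (1:ℝ)/d = 1 := by
      simp [Finset.sum_const]
      field_simp
    have key := Real.geom_mean_le_arith_mean_weighted Finset.univ
      (fun _ => 1/(d:ℝ)) (fun i => hH.eigenvalues i) hw hw1 (fun i _ => hev i)
    -- key : ∏ i, (eigen i) ^ (1/d) ≤ ∑ i, (1/d) * eigen i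
    have hrhs : ∑ i : Fin d, (1/(d:ℝ)) * hH.eigenvalues i = G.trace / d := by
      rw [← Finset.mul_sum, ← htrace]; ring
    rw [hrhs] at key
    have hpow := pow_le_pow_left₀ (Finset.prod_nonneg fun i _ =>
      Real.rpow_nonneg (hev i) _) key d
    have hlhs : (∏ i, hH.eigenvalues i ^ ((1:ℝ)/d)) ^ d = ∏ i, hH.eigenvalues i := by
      rw [← Finset.prod_pow]
      congr 1
      ext i
      rw [← Real.rpow_natCast (hH.eigenvalues i ^ ((1:ℝ)/d)) d, ← Real.rpow_mul (hev i)]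
      rw [one_div, inv_mul_cancel₀ (ne_of_gt hdpos), Real.rpow_one]
    rw [hlhs] at hpow
    exact hpow
  rw [hdet]
  refine hamgm.trans ?_
  gcongr
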